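/- Define g(m, s) = m·Φ(m/s) + s·φ(m/s) for s > 0, the expected improvement with mean gap m and standard deviation s. Then for fixed m, g is nondecreasing in s: if 0 < s₁ ≤ s₂ then g(m, s₁) ≤ g(m, s₂). -/

import Mathlib

open Real

noncomputable def stdNormalPDF (t : ℝ) : ℝ :=
  (Real.sqrt (2 * Real.pi))⁻¹ * Real.exp (-t ^ 2 / 2)

noncomputable def stdNormalCDF (t : ℝ) : ℝ :=
  ∫ s in Set.Iic t, stdNormalPDF s

/-- Closed-form expected improvement with mean gap `m` and standard deviation `s`. -/
noncomputable def eiClosedForm (m s : ℝ) : ℝ :=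
  m * stdNormalCDF (m / s) + s * stdNormalPDF (m / s)

open MeasureTheory in
lemma stdNormalPDF_continuous : Continuous stdNormalPDF := by
  unfold stdNormalPDF; fun_prop

lemma stdNormalPDF_nonneg (t : ℝ) : 0 ≤ stdNormalPDF t := by
  unfold stdNormalPDF
  positivity

open MeasureTheory in
lemma stdNormalPDF_integrable : Integrable stdNormalPDF := by
  have h : Integrable (fun x : ℝ => Real.exp (-(1/2) * x ^ 2)) :=
    integrable_exp_neg_mul_sq (by norm_num)
  have h2 := h.const_mul (Real.sqrt (2 * Real.pi))⁻¹
  refine h2.congr ?_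
  filter_upwards with x
  unfold stdNormalPDF
  ring_nf

lemma stdNormalCDF_hasDeriv (t : ℝ) : HasDerivAt stdNormalCDF (stdNormalPDF t) t := by
  have key : ∀ u : ℝ, stdNormalCDF u = stdNormalCDF (t - 1) + ∫ x in (t-1)..u, stdNormalPDF x := by
    intro u
    unfold stdNormalCDF
    rw [← intervalIntegral.integral_Iic_sub_Iic stdNormalPDF_integrable.integrableOn
      stdNormalPDF_integrable.integrableOn]
    ring
  have hd : HasDerivAt (fun u => stdNormalCDF (t-1) + ∫ x in (t-1)..u, stdNormalPDF x)
      (stdNormalPDF t) t := by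
    refine HasDerivAt.const_add _ ?_
    exact intervalIntegral.integral_hasDerivAt_right
      stdNormalPDF_integrable.intervalIntegrable
      stdNormalPDF_continuous.aestronglyMeasurable.stronglyMeasurableAtFilter
      stdNormalPDF_continuous.continuousAt
  exact hd.congr_of_eventuallyEq (Filter.Eventually.of_forall key)

lemma stdNormalPDF_hasDeriv (t : ℝ) : HasDerivAt stdNormalPDF (-t * stdNormalPDF t) t := by
  unfold stdNormalPDF
  have h1 : HasDerivAt (fun x : ℝ => -x ^ 2 / 2) (-t) t := by
    have h := ((hasDerivAt_pow 2 t).neg).div_const 2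
    refine h.congr_deriv ?_
    push_cast; ring
  have h2 := (h1.exp).const_mul (Real.sqrt (2 * Real.pi))⁻¹
  refine h2.congr_deriv ?_
  ring

lemma eiClosedForm_hasDeriv (m : ℝ) {s : ℝ} (hs : 0 < s) :
    HasDerivAt (fun s => eiClosedForm m s) (stdNormalPDF (m / s)) s := by
  have hms : HasDerivAt (fun s : ℝ => m / s) (-(m / s ^ 2)) s := by
    have h := (hasDerivAt_inv hs.ne').const_mul m
    simpa [div_eq_mul_inv, neg_div] using h
  have h1 := ((stdNormalCDF_hasDeriv (m / s)).comp s hms).const_mul m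
  have h2 := (hasDerivAt_id s).mul ((stdNormalPDF_hasDeriv (m / s)).comp s hms)
  have h := h1.add h2
  unfold eiClosedForm
  refine h.congr_deriv ?_
  simp only [Function.comp_apply, id]
  field_simp
  ring

theorem eiClosedForm_mono_in_stddev (m s₁ s₂ : ℝ) (h₁ : 0 < s₁) (h₂ : s₁ ≤ s₂) :
    eiClosedForm m s₁ ≤ eiClosedForm m s₂ := by
  have hmono : MonotoneOn (fun s => eiClosedForm m s) (Set.Ioi 0) := by
    have hint : interior (Set.Ioi (0:ℝ)) = Set.Ioi 0 := interior_Ioi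
    refine monotoneOn_of_deriv_nonneg (convex_Ioi 0) ?_ ?_ ?_
    · intro x hx
      exact ((eiClosedForm_hasDeriv m hx).continuousAt).continuousWithinAt
    · rw [hint]
      intro x hx
      exact ((eiClosedForm_hasDeriv m hx).differentiableAt).differentiableWithinAt
    · rw [hint]
      intro x hx
      rw [(eiClosedForm_hasDeriv m hx).deriv]
      exact stdNormalPDF_nonneg _
  exact hmono h₁ (lt_of_lt_of_le h₁ h₂) h₂
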